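/- There is no cyclic sequence of compressions: there do not exist finite simple graphs G_0, G_1, ..., G_t with t ≥ 1, G_t isomorphic to G_0, such that for each 0 ≤ i < t, G_{i+1} = C_{x_i y_i}(G_i) for some distinct vertices x_i, y_i and G_{i+1} is not isomorphic to G_i. Consequently, the non-isomorphic compression relation generates a strict partial order on the isomorphism classes of graphs with n vertices and m edges. -/

import Mathlib

open SimpleGraph

/-- The compression `C_{xy}(G)`: every edge `{x,v}` of `G` with `v ≠ y` and `v` not adjacent
to `y` in `G` is replaced by the edge `{y,v}`; all other edges are unchanged. -/
def compress {V : Type*} (G : SimpleGraph V) (x y : V) : SimpleGraph V where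
  Adj a b :=
    (G.Adj a b ∧ ¬ ((a = x ∧ b ≠ y ∧ ¬ G.Adj y b) ∨ (b = x ∧ a ≠ y ∧ ¬ G.Adj y a))) ∨
    (a = y ∧ b ≠ y ∧ G.Adj x b ∧ ¬ G.Adj y b) ∨
    (b = y ∧ a ≠ y ∧ G.Adj x a ∧ ¬ G.Adj y a)
  symm := by
    constructor
    intro a b h
    rcases h with ⟨hab, hn⟩ | h | h
    · exact Or.inl ⟨hab.symm, fun hc => hn hc.symm⟩
    · exact Or.inr (Or.inr h)
    · exact Or.inr (Or.inl h)
  loopless := by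
    constructor
    intro a h
    rcases h with ⟨hab, _⟩ | ⟨_, h, _⟩ | ⟨_, h, _⟩
    · exact G.irrefl hab
    · exact h ‹_›
    · exact h ‹_›

namespace CompressAux

variable {V : Type*}

lemma compress_adj (G : SimpleGraph V) (x y a b : V) :
    (compress G x y).Adj a b ↔
      (G.Adj a b ∧ ¬ ((a = x ∧ b ≠ y ∧ ¬ G.Adj y b) ∨ (b = x ∧ a ≠ y ∧ ¬ G.Adj y a))) ∨
      (a = y ∧ b ≠ y ∧ G.Adj x b ∧ ¬ G.Adj y b) ∨
      (b = y ∧ a ≠ y ∧ G.Adj x a ∧ ¬ G.Adj y a) := Iff.rfl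

noncomputable def pot [Fintype V] (G : SimpleGraph V) : ℕ :=
  ∑ v : V, ((G.neighborSet v).ncard) ^ 2

lemma pot_eq_of_iso [Fintype V] {G H : SimpleGraph V} (e : G ≃g H) : pot G = pot H := by
  unfold pot
  rw [← Equiv.sum_comp e.toEquiv (fun v => ((H.neighborSet v).ncard) ^ 2)]
  refine Finset.sum_congr rfl fun v _ => ?_
  have h : (G.neighborSet v).ncard = (H.neighborSet (e v)).ncard :=
    Nat.card_congr (e.mapNeighborSet v)
  rw [h]; rfl

lemma pot_lt [Fintype V] (G : SimpleGraph V) (x y : V) (hxy : x ≠ y)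
    (hne : ¬ Nonempty (compress G x y ≃g G)) :
    pot G < pot (compress G x y) := by
  classical
  set C := compress G x y with hC
  set A := G.neighborSet x with hA
  set B := G.neighborSet y with hB
  set M := A \ insert y B with hM
  have hMmem : ∀ b, b ∈ M ↔ G.Adj x b ∧ b ≠ y ∧ ¬ G.Adj y b := by
    intro b
    simp only [hM, Set.mem_diff, Set.mem_insert_iff, hA, hB, mem_neighborSet, not_or]
  have hGxx : ¬ G.Adj x x := G.loopless.irrefl x
  have hGyy : ¬ G.Adj y y := G.loopless.irrefl y
  -- adjacency of x in C
  have f1 : ∀ b, C.Adj x b ↔ G.Adj x b ∧ (b = y ∨ G.Adj y b) := by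
    intro b
    rw [hC, compress_adj]
    constructor
    · rintro (⟨h, hn⟩ | ⟨h1, _⟩ | ⟨h1, _, h3, _⟩)
      · refine ⟨h, ?_⟩
        by_contra hc
        push_neg at hc
        exact hn (Or.inl ⟨rfl, hc.1, hc.2⟩)
      · exact absurd h1 hxy
      · subst h1; exact absurd h3 hGxx
    · rintro ⟨h, hy⟩
      refine Or.inl ⟨h, ?_⟩
      rintro (⟨-, h2, h3⟩ | ⟨h1, -, h3⟩)
      · rcases hy with hy | hy
        · exact h2 hy
        · exact h3 hy
      · subst h1; exact hGxx h
  -- adjacency of y in C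
  have f2 : ∀ b, C.Adj y b ↔ G.Adj y b ∨ b ∈ M := by
    intro b
    rw [hC, compress_adj, hMmem]
    constructor
    · rintro (⟨h, -⟩ | ⟨-, h2, h3, h4⟩ | ⟨h1, h2, -, -⟩)
      · exact Or.inl h
      · exact Or.inr ⟨h3, h2, h4⟩
      · subst h1; exact absurd rfl h2
    · rintro (h | ⟨h1, h2, h3⟩)
      · refine Or.inl ⟨h, ?_⟩
        rintro (⟨h1, -, -⟩ | ⟨-, h2', -⟩)
        · exact hxy h1.symm
        · exact h2' rfl
      · exact Or.inr (Or.inl ⟨rfl, h2, h1, h3⟩)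
  -- adjacency away from x, y
  have f4 : ∀ a b, a ≠ x → a ≠ y → b ≠ x → b ≠ y → (C.Adj a b ↔ G.Adj a b) := by
    intro a b hax hay hbx hby
    rw [hC, compress_adj]
    constructor
    · rintro (⟨h, -⟩ | ⟨h1, -⟩ | ⟨h1, -⟩)
      · exact h
      · exact absurd h1 hay
      · exact absurd h1 hby
    · intro h
      refine Or.inl ⟨h, ?_⟩
      rintro (⟨h1, -, -⟩ | ⟨h1, -, -⟩)
      · exact hax h1
      · exact hbx h1
  -- degrees away from x, y
  have f3 : ∀ a, a ≠ x → a ≠ y → (C.neighborSet a).ncard = (G.neighborSet a).ncard := by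
    intro a hax hay
    have hadj : ∀ b, C.Adj a b ↔
        (G.Adj a b ∧ ¬ (b = x ∧ ¬ G.Adj y a)) ∨ (b = y ∧ G.Adj x a ∧ ¬ G.Adj y a) := by
      intro b
      rw [hC, compress_adj]
      constructor
      · rintro (⟨h, hn⟩ | ⟨h1, -⟩ | ⟨h1, -, h3, h4⟩)
        · refine Or.inl ⟨h, ?_⟩
          rintro ⟨hbx, hya⟩
          exact hn (Or.inr ⟨hbx, hay, hya⟩)
        · exact absurd h1 hay
        · exact Or.inr ⟨h1, h3, h4⟩
      · rintro (⟨h, hn⟩ | ⟨h1, h2, h3⟩)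
        · refine Or.inl ⟨h, ?_⟩
          rintro (⟨h1, -, -⟩ | ⟨h1, -, h3⟩)
          · exact hax h1
          · exact hn ⟨h1, h3⟩
        · exact Or.inr (Or.inr ⟨h1, hay, h2, h3⟩)
    by_cases hya : G.Adj y a
    · have hset : C.neighborSet a = G.neighborSet a := by
        ext b
        simp only [mem_neighborSet, hadj]
        constructor
        · rintro (⟨h, -⟩ | ⟨-, -, h3⟩)
          · exact h
          · exact absurd hya h3
        · intro h; exact Or.inl ⟨h, fun hc => hc.2 hya⟩
      rw [hset]
    · by_cases hxa : G.Adj x a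
      · have hset : C.neighborSet a = insert y (G.neighborSet a \ {x}) := by
          ext b
          simp only [mem_neighborSet, hadj, Set.mem_insert_iff, Set.mem_diff,
            Set.mem_singleton_iff]
          constructor
          · rintro (⟨h, hn⟩ | ⟨h1, -, -⟩)
            · exact Or.inr ⟨h, fun hbx => hn ⟨hbx, hya⟩⟩
            · exact Or.inl h1
          · rintro (h1 | ⟨h, hbx⟩)
            · exact Or.inr ⟨h1, hxa, hya⟩
            · exact Or.inl ⟨h, fun hc => hbx hc.1⟩
        have hxmem : x ∈ G.neighborSet a := hxa.symm
        have hynot : y ∉ G.neighborSet a \ {x} := fun hmem => hya hmem.1.symm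
        rw [hset, Set.ncard_insert_of_notMem hynot (Set.toFinite _),
          Set.ncard_diff_singleton_add_one hxmem (Set.toFinite _)]
      · have hset : C.neighborSet a = G.neighborSet a := by
          ext b
          simp only [mem_neighborSet, hadj]
          constructor
          · rintro (⟨h, -⟩ | ⟨-, h2, -⟩)
            · exact h
            · exact absurd h2 hxa
          · intro h
            refine Or.inl ⟨h, ?_⟩
            rintro ⟨h1, -⟩
            subst h1
            exact hxa h.symm
        rw [hset]
  -- case M empty : C = G
  by_cases hM0 : M = ∅
  · exfalso
    have hno : ∀ b, ¬ (G.Adj x b ∧ b ≠ y ∧ ¬ G.Adj y b) := by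
      intro b hb
      have hbM : b ∈ M := (hMmem b).2 hb
      rw [hM0] at hbM
      exact hbM
    have hCG : C = G := by
      ext a b
      rw [hC, compress_adj]
      constructor
      · rintro (⟨h, -⟩ | ⟨h1, h2, h3, h4⟩ | ⟨h1, h2, h3, h4⟩)
        · exact h
        · exact absurd ⟨h3, h2, h4⟩ (hno b)
        · exact absurd ⟨h3, h2, h4⟩ (hno a)
      · intro h
        refine Or.inl ⟨h, ?_⟩
        rintro (⟨h1, h2, h3⟩ | ⟨h1, h2, h3⟩)
        · exact hno b ⟨h1 ▸ h, h2, h3⟩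
        · exact hno a ⟨h1 ▸ h.symm, h2, h3⟩
    exact hne ⟨by rw [hCG]⟩
  -- case B \ {x} ⊆ A : swap isomorphism
  by_cases hsw : ∀ b, G.Adj y b → b = x ∨ G.Adj x b
  · exfalso
    have fwd : ∀ a b, C.Adj a b → G.Adj (Equiv.swap x y a) (Equiv.swap x y b) := by
      intro a b hab
      rcases eq_or_ne x a with rfl | hax
      · rw [f1] at hab
        rw [Equiv.swap_apply_left]
        rcases eq_or_ne x b with rfl | hbx
        · exact absurd hab.1 hGxx
        rcases eq_or_ne y b with rfl | hby
        · rw [Equiv.swap_apply_right]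
          exact hab.1.symm
        · rw [Equiv.swap_apply_of_ne_of_ne hbx.symm hby.symm]
          rcases hab.2 with h | h
          · exact absurd h.symm hby
          · exact h
      rcases eq_or_ne y a with rfl | hay
      · rw [f2] at hab
        rw [Equiv.swap_apply_right]
        rcases eq_or_ne x b with rfl | hbx
        · rw [Equiv.swap_apply_left]
          rcases hab with h | h
          · exact h.symm
          · rw [hMmem] at h
            exact absurd h.1 hGxx
        rcases eq_or_ne y b with rfl | hby
        · rcases hab with h | h
          · exact absurd h hGyy
          · exact absurd rfl ((hMmem y).1 h).2.1
        · rw [Equiv.swap_apply_of_ne_of_ne hbx.symm hby.symm]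
          rcases hab with h | h
          · rcases hsw b h with h1 | h1
            · exact absurd h1.symm hbx
            · exact h1
          · rw [hMmem] at h
            exact h.1
      · rw [Equiv.swap_apply_of_ne_of_ne hax.symm hay.symm]
        rcases eq_or_ne x b with rfl | hbx
        · rw [Equiv.swap_apply_left]
          have hab' : C.Adj x a := hab.symm
          rw [f1] at hab'
          rcases hab'.2 with h | h
          · exact absurd h.symm hay
          · exact h.symm
        rcases eq_or_ne y b with rfl | hby
        · rw [Equiv.swap_apply_right]
          have hab' : C.Adj y a := hab.symm
          rw [f2] at hab'
          rcases hab' with h | h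
          · rcases hsw a h with h1 | h1
            · exact absurd h1.symm hax
            · exact h1.symm
          · rw [hMmem] at h
            exact h.1.symm
        · rw [Equiv.swap_apply_of_ne_of_ne hbx.symm hby.symm]
          exact (f4 a b hax.symm hay.symm hbx.symm hby.symm).1 hab
    have bwd : ∀ a b, G.Adj a b → C.Adj (Equiv.swap x y a) (Equiv.swap x y b) := by
      intro a b hab
      rcases eq_or_ne x a with rfl | hax
      · rw [Equiv.swap_apply_left]
        rcases eq_or_ne x b with rfl | hbx
        · exact absurd hab hGxx
        rcases eq_or_ne y b with rfl | hby
        · rw [Equiv.swap_apply_right, f2]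
          exact Or.inl hab.symm
        · rw [Equiv.swap_apply_of_ne_of_ne hbx.symm hby.symm, f2]
          by_cases hyb : G.Adj y b
          · exact Or.inl hyb
          · exact Or.inr ((hMmem b).2 ⟨hab, hby.symm, hyb⟩)
      rcases eq_or_ne y a with rfl | hay
      · rw [Equiv.swap_apply_right]
        rcases eq_or_ne y b with rfl | hby
        · exact absurd hab hGyy
        rcases eq_or_ne x b with rfl | hbx
        · rw [Equiv.swap_apply_left, f1]
          exact ⟨hab.symm, Or.inl rfl⟩
        · rw [Equiv.swap_apply_of_ne_of_ne hbx.symm hby.symm, f1]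
          rcases hsw b hab with h1 | h1
          · exact absurd h1.symm hbx
          · exact ⟨h1, Or.inr hab⟩
      · rw [Equiv.swap_apply_of_ne_of_ne hax.symm hay.symm]
        rcases eq_or_ne x b with rfl | hbx
        · rw [Equiv.swap_apply_left]
          refine ((f2 a).2 ?_).symm
          by_cases hya : G.Adj y a
          · exact Or.inl hya
          · exact Or.inr ((hMmem a).2 ⟨hab.symm, hay.symm, hya⟩)
        rcases eq_or_ne y b with rfl | hby
        · rw [Equiv.swap_apply_right]
          refine ((f1 a).2 ?_).symm
          rcases hsw a hab.symm with h1 | h1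
          · exact absurd h1.symm hax
          · exact ⟨h1, Or.inr hab.symm⟩
        · rw [Equiv.swap_apply_of_ne_of_ne hbx.symm hby.symm]
          exact (f4 a b hax.symm hay.symm hbx.symm hby.symm).2 hab
    refine hne ⟨⟨Equiv.swap x y, ?_⟩⟩
    intro a b
    constructor
    · intro h
      have h2 := bwd _ _ h
      simpa [Equiv.swap_apply_self] using h2
    · exact fwd a b
  -- main case: potential strictly increases
  push_neg at hsw
  obtain ⟨b₀, hb₀y, hb₀x, hb₀A⟩ := hsw
  have hMsub : M ⊆ A := Set.diff_subset
  have hMA : Disjoint M B := by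
    rw [Set.disjoint_left]
    intro b hb hbB
    exact ((hMmem b).1 hb).2.2 hbB
  -- neighbor sets of x and y in C
  have hCx : C.neighborSet x = A \ M := by
    ext b
    simp only [mem_neighborSet, f1, Set.mem_diff, hMmem, hA, mem_neighborSet]
    constructor
    · rintro ⟨h, hy⟩
      refine ⟨h, ?_⟩
      rintro ⟨-, h2, h3⟩
      rcases hy with hy | hy
      · exact h2 hy
      · exact h3 hy
    · rintro ⟨h, hn⟩
      refine ⟨h, ?_⟩
      by_contra hc
      push_neg at hc
      exact hn ⟨h, hc.1, hc.2⟩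
  have hCy : C.neighborSet y = B ∪ M := by
    ext b
    simp only [mem_neighborSet, f2, Set.mem_union, hB, mem_neighborSet]
  -- cardinalities
  set k := M.ncard with hk
  have hk1 : 1 ≤ k := by
    rw [hk, Nat.one_le_iff_ne_zero]
    intro h0
    exact hM0 ((Set.ncard_eq_zero (Set.toFinite _)).1 h0)
  have hdx : A.ncard = (A \ M).ncard + k := by
    have h1 := Set.ncard_diff hMsub (Set.toFinite _)
    have h2 := Set.ncard_le_ncard hMsub (Set.toFinite _)
    omega
  have hdy : (B ∪ M).ncard = B.ncard + k := by
    rw [Set.union_comm, Set.ncard_union_eq hMA (Set.toFinite _) (Set.toFinite _)]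
    omega
  -- strict inequality (A \ M).ncard < B.ncard
  have hstrict : (A \ M).ncard < B.ncard := by
    have hmap : ∀ c ∈ A \ M, (if c = y then x else c) ∈ B \ {b₀} := by
      intro c hc
      obtain ⟨hcA, hcM⟩ := hc
      rw [hMmem] at hcM
      push_neg at hcM
      by_cases hcy : c = y
      · rw [if_pos hcy]
        have hxB : G.Adj y x := (hcy ▸ hcA : G.Adj x y).symm
        exact ⟨hxB, fun h => hb₀x ((Set.mem_singleton_iff.1 h).symm)⟩
      · rw [if_neg hcy]
        have hyc : G.Adj y c := hcM hcA hcy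
        refine ⟨hyc, ?_⟩
        intro hcb
        subst hcb
        exact hb₀A hcA
    have hinj : Set.InjOn (fun c => if c = y then x else c) (A \ M) := by
      intro c1 h1 c2 h2 he
      simp only at he
      by_cases h1y : c1 = y
      · rw [if_pos h1y] at he
        by_cases h2y : c2 = y
        · rw [h1y, h2y]
        · rw [if_neg h2y] at he
          have h2A : G.Adj x c2 := h2.1
          rw [← he] at h2A
          exact absurd h2A hGxx
      · rw [if_neg h1y] at he
        by_cases h2y : c2 = y
        · rw [if_pos h2y] at he
          have h1A : G.Adj x c1 := h1.1
          rw [he] at h1A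
          exact absurd h1A hGxx
        · rw [if_neg h2y] at he
          exact he
    have hb₀B : b₀ ∈ B \ {b₀} ∨ True := Or.inr trivial
    calc (A \ M).ncard ≤ (B \ {b₀}).ncard :=
          Set.ncard_le_ncard_of_injOn _ hmap hinj (Set.toFinite _)
      _ < B.ncard := Set.ncard_diff_singleton_lt_of_mem hb₀y (Set.toFinite _)
  -- sum decomposition
  have hsum : ∀ H : SimpleGraph V, pot H = (H.neighborSet x).ncard ^ 2 +
      ((H.neighborSet y).ncard ^ 2 +
        ∑ v ∈ (Finset.univ.erase x).erase y, ((H.neighborSet v).ncard) ^ 2) := by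
    intro H
    unfold pot
    rw [← Finset.add_sum_erase _ _ (Finset.mem_univ x),
      ← Finset.add_sum_erase _ (fun v => ((H.neighborSet v).ncard) ^ 2)
        (Finset.mem_erase.mpr ⟨Ne.symm hxy, Finset.mem_univ y⟩)]
  have htail : ∑ v ∈ (Finset.univ.erase x).erase y, ((C.neighborSet v).ncard) ^ 2
      = ∑ v ∈ (Finset.univ.erase x).erase y, ((G.neighborSet v).ncard) ^ 2 := by
    refine Finset.sum_congr rfl fun v hv => ?_
    rw [Finset.mem_erase, Finset.mem_erase] at hv
    rw [f3 v hv.2.1 hv.1]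
  rw [hsum C, hsum G, htail, hCx, hCy, hdy]
  have hdx' : (G.neighborSet x).ncard = (A \ M).ncard + k := hdx
  rw [hdx']
  have hstrict' := hstrict
  nlinarith [hk1, hstrict']

end CompressAux

/-- There is no cyclic sequence of non-isomorphic compressions: if each `G_{i+1}` is obtained
from `G_i` by a compression `C_{x_i y_i}` (with `x_i ≠ y_i`) and is not isomorphic to `G_i`,
for `0 ≤ i < t` with `t ≥ 1`, then `G_t` is not isomorphic to `G_0`.  Consequently the
non-isomorphic compression relation generates a strict partial order on isomorphism classes of
graphs with given numbers of vertices and edges. -/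
theorem no_cyclic_sequence_of_compressions {V : Type*} [Fintype V] (t : ℕ) (ht : 1 ≤ t)
    (Gs : ℕ → SimpleGraph V) (x y : ℕ → V)
    (hstep : ∀ i < t, x i ≠ y i ∧ Gs (i + 1) = compress (Gs i) (x i) (y i) ∧
      ¬ Nonempty (Gs (i + 1) ≃g Gs i)) :
    ¬ Nonempty (Gs t ≃g Gs 0) := by
  rintro ⟨e⟩
  have hmono : ∀ i, i ≤ t → CompressAux.pot (Gs 0) + i ≤ CompressAux.pot (Gs i) := by
    intro i
    induction i with
    | zero => simp
    | succ n ih =>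
      intro hn
      have h1 := ih (Nat.le_of_succ_le hn)
      obtain ⟨hxy, heq, hniso⟩ := hstep n (Nat.lt_of_succ_le hn)
      have h2 := CompressAux.pot_lt (Gs n) (x n) (y n) hxy (by rw [← heq]; exact hniso)
      rw [← heq] at h2
      omega
  have h1 := hmono t le_rfl
  have h2 := CompressAux.pot_eq_of_iso e
  omega
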